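/- Let f be a monic polynomial over ℂ of degree 3 with roots r₁, r₂, r₃ (with multiplicity), let 𝔼 := (r₁+r₂+r₃)/3 and let 𝕎 := (1/3)·∑ᵢ (rᵢ − 𝔼)³ be the third central moment of the roots. Let F be any polynomial over ℂ with F' = f (so F has degree 4). Then the average of f over the 4 roots of F (counted with multiplicity) equals 2𝕎; in particular it does not depend on the constant of integration: (1/4)·∑_{u ∈ roots(F)} f(u) = 2𝕎. -/

import Mathlib

open Polynomial

private lemma multiset_card_eq_four {α : Type*} {s : Multiset α} (h : Multiset.card s = 4) :
    ∃ a b c d, s = {a, b, c, d} := by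
  obtain ⟨a, ha⟩ := Multiset.card_pos_iff_exists_mem.mp (by rw [h]; norm_num)
  obtain ⟨t, rfl⟩ := Multiset.exists_cons_of_mem ha
  have ht : Multiset.card t = 3 := by simpa using h
  obtain ⟨b, c, d, rfl⟩ := Multiset.card_eq_three.mp ht
  exact ⟨a, b, c, d, rfl⟩

/-- For a monic cubic `f` with roots `r₁, r₂, r₃`, third central moment `𝕎`, and any
antiderivative `F` of `f`, the average of `f` over the 4 roots of `F` is `2𝕎`
(independently of the constant of integration). -/
theorem monic_cubic_mean_over_antiderivative_roots (r₁ r₂ r₃ : ℂ) (f : Polynomial ℂ)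
    (hf : f = (X - C r₁) * (X - C r₂) * (X - C r₃))
    (E W : ℂ) (hE : E = (r₁ + r₂ + r₃) / 3)
    (hW : W = ((r₁ - E) ^ 3 + (r₂ - E) ^ 3 + (r₃ - E) ^ 3) / 3)
    (F : Polynomial ℂ) (hF : derivative F = f) :
    (F.roots.map (fun u => f.eval u)).sum / 4 = 2 * W := by
  -- explicit antiderivative
  set P : ℂ[X] := C (4⁻¹ : ℂ) * X ^ 4 - C ((r₁ + r₂ + r₃) / 3) * X ^ 3
      + C ((r₁ * r₂ + r₁ * r₃ + r₂ * r₃) / 2) * X ^ 2 - C (r₁ * r₂ * r₃) * X with hP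
  have hdP : derivative P = f := by
    apply Polynomial.funext
    intro x
    simp only [hP, hf, derivative_sub, derivative_add, derivative_mul, derivative_C,
      derivative_X_pow, derivative_X, eval_add, eval_sub, eval_mul, eval_pow, eval_C, eval_X,
      zero_mul, mul_one, add_zero, zero_add, mul_zero]
    push_cast
    ring
  have hFP : ∃ c : ℂ, F = P + C c := by
    have hz : derivative (F - P) = 0 := by rw [derivative_sub, hF, hdP, sub_self]
    refine ⟨(F - P).coeff 0, ?_⟩
    have := Polynomial.eq_C_of_derivative_eq_zero hz
    linear_combination (norm := ring_nf) this
  obtain ⟨k, hk⟩ := hFP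
  have hdeg : F.natDegree = 4 := by
    rw [hk, hP]
    compute_degree!
  have hF0 : F ≠ 0 := by
    intro h
    rw [h] at hdeg
    simp at hdeg
  have hcard : Multiset.card F.roots = 4 := by
    rw [← hdeg]
    exact (Polynomial.splits_iff_card_roots.mp (IsAlgClosed.splits F))
  obtain ⟨a, b, c, d, hroots⟩ := multiset_card_eq_four hcard
  have hlc : F.leadingCoeff = 4⁻¹ := by
    rw [Polynomial.leadingCoeff, hdeg, hk, hP]
    simp [coeff_X_pow, coeff_C]
  have hfac : F = C (4⁻¹ : ℂ) * ((X - C a) * (X - C b) * (X - C c) * (X - C d)) := by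
    have h1 := (IsAlgClosed.splits F).eq_prod_roots
    rw [hlc, hroots] at h1
    rw [h1]
    simp only [Multiset.insert_eq_cons, Multiset.map_cons, Multiset.map_singleton,
      Multiset.prod_cons, Multiset.prod_singleton]
    ring
  have hder : derivative (C (4⁻¹ : ℂ) * ((X - C a) * (X - C b) * (X - C c) * (X - C d))) = f := by
    rw [← hfac]; exact hF
  have key : ∀ t : ℂ, 4⁻¹ * ((t - b) * (t - c) * (t - d) + (t - a) * (t - c) * (t - d)
      + (t - a) * (t - b) * (t - d) + (t - a) * (t - b) * (t - c))
      = (t - r₁) * (t - r₂) * (t - r₃) := by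
    intro t
    have h := congrArg (Polynomial.eval t) hder
    rw [hf] at h
    simp only [derivative_mul, derivative_C, derivative_sub, derivative_X, zero_mul, zero_add,
      sub_zero, mul_one, one_mul, eval_add, eval_sub, eval_mul, eval_C, eval_X] at h
    linear_combination h
  have h1 := key 1
  have hm1 := key (-1)
  have h0 := key 0
  have eq1 : a + b + c + d = 4 * (r₁ + r₂ + r₃) / 3 := by
    linear_combination (-(2/3 : ℂ)) * h1 - (2/3 : ℂ) * hm1 + (4/3 : ℂ) * h0
  have eq2 : a * b + a * c + a * d + b * c + b * d + c * d
      = 2 * (r₁ * r₂ + r₁ * r₃ + r₂ * r₃) := by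
    linear_combination h1 - hm1
  have eq3 : a * b * c + a * b * d + a * c * d + b * c * d = 4 * (r₁ * r₂ * r₃) := by
    linear_combination (-4 : ℂ) * h0
  subst hE hW
  rw [hroots, hf]
  simp only [Multiset.insert_eq_cons, Multiset.map_cons, Multiset.map_singleton,
    Multiset.sum_cons, Multiset.sum_singleton, eval_mul, eval_sub, eval_X, eval_C]
  have s1 : ℂ := a + b + c + d
  linear_combination
    (((a + b + c + d) ^ 2 + (r₁ + r₂ + r₃) * (a + b + c + d) / 3
      + (4 / 9 : ℂ) * (r₁ + r₂ + r₃) ^ 2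
      - 3 * (a * b + a * c + a * d + b * c + b * d + c * d)
      + (r₁ * r₂ + r₁ * r₃ + r₂ * r₃)) / 4) * eq1
    - ((r₁ + r₂ + r₃) / 2) * eq2 + (3 / 4 : ℂ) * eq3
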